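/- If g is a computably transparent partial multifunction on ℕ, then Weih_g ≤_m g; consequently, for all partial multifunctions f,g on ℕ with g computably transparent, f ≤_m g if and only if Weih_f ≤_m g (i.e., the operator Weih is left adjoint to the inclusion of the computably transparent partial multifunctions into all partial multifunctions, both preordered by ≤_m). -/

import Mathlib

namespace KleeneOracle

/-- `e ∗ x`: application of the `e`-th partial computable function on ℕ. -/
def ap (e x : ℕ) : Part ℕ :=
  Nat.Partrec.Code.eval (Denumerable.ofNat Nat.Partrec.Code e) x

/-- `e ∗ A := {e ∗ a : a ∈ A}`. -/
def apSet (e : ℕ) (A : Set ℕ) : Set ℕ := {z | ∃ a ∈ A, z ∈ ap e a}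

/-- A partial multifunction on ℕ. -/
abbrev Multifun := ℕ → Part (Set ℕ)

def Transparent (U : Multifun) : Prop :=
  ∃ u : ℕ, ∀ (e x : ℕ) (A : Set ℕ), A ∈ U x → (∀ y ∈ A, (ap e y).Dom) →
    ∃ c ∈ ap u e, ∃ d ∈ ap c x, ∃ B ∈ U d, B ⊆ apSet e A

def Inflationary (U : Multifun) : Prop :=
  ∃ η : ℕ, ∀ x : ℕ, ∃ c ∈ ap η x, ∃ B ∈ U c, B ⊆ {x}

def mcomp (g f : Multifun) : Multifun := fun x =>
  ⟨∃ A ∈ f x, ∀ y ∈ A, (g y).Dom,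
   fun _ => {z | ∃ A ∈ f x, ∃ y ∈ A, ∃ B ∈ g y, z ∈ B}⟩

def Idempotent (U : Multifun) : Prop :=
  ∃ μ : ℕ, ∀ (x : ℕ) (A : Set ℕ), A ∈ mcomp U U x →
    ∃ c ∈ ap μ x, ∃ B ∈ U c, B ⊆ A

def mRed (f g : Multifun) : Prop :=
  ∃ e : ℕ, ∀ (x : ℕ) (A : Set ℕ), A ∈ f x →
    ∃ c ∈ ap e x, ∃ B ∈ g c, B ⊆ A

def wRed (f g : Multifun) : Prop :=
  ∃ em ep : ℕ, ∀ (x : ℕ) (A : Set ℕ), A ∈ f x →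
    ∃ c ∈ ap em x, ∃ B ∈ g c, ∀ y ∈ B, ∃ z ∈ ap ep (Nat.pair x y), z ∈ A

def Weih (g : Multifun) : Multifun := fun w =>
  ⟨∃ c ∈ ap w.unpair.1 w.unpair.2.unpair.2, ∃ B ∈ g c,
     ∀ y ∈ B, (ap w.unpair.2.unpair.1 (Nat.pair w.unpair.2.unpair.2 y)).Dom,
   fun _ => {z | ∃ c ∈ ap w.unpair.1 w.unpair.2.unpair.2, ∃ B ∈ g c,
     ∃ y ∈ B, z ∈ ap w.unpair.2.unpair.1 (Nat.pair w.unpair.2.unpair.2 y)}⟩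

def idsq (g : Multifun) : Multifun := fun w =>
  if w.unpair.1 = 0 then Part.some {w.unpair.2}
  else if w.unpair.1 = 1 then g w.unpair.2
  else Part.none

def pWeih (g : Multifun) : Multifun := Weih (idsq g)

def pwRed (f g : Multifun) : Prop := wRed f (idsq g)

def Med (Q : Set ℕ) : Multifun := fun e =>
  ⟨∀ a ∈ Q, (ap e a).Dom, fun _ => apSet e Q⟩

def MedRed (P Q : Set ℕ) : Prop :=
  ∃ e : ℕ, (∀ a ∈ Q, (ap e a).Dom) ∧ apSet e Q ⊆ P

def constMF (P : Set ℕ) : Multifun := fun _ => Part.some P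

def imp (p q : Set ℕ) : Set ℕ := {e | ∀ x ∈ p, ∃ z ∈ ap e x, z ∈ q}

def OpMonotone (j : Set ℕ → Set ℕ) : Prop :=
  ∃ u : ℕ, ∀ p q : Set ℕ, ∀ a ∈ imp p q, ∃ c ∈ ap u a, c ∈ imp (j p) (j q)

def OpInflationary (j : Set ℕ → Set ℕ) : Prop :=
  ∃ e : ℕ, ∀ p : Set ℕ, e ∈ imp p (j p)

def OpIdempotent (j : Set ℕ → Set ℕ) : Prop :=
  ∃ e : ℕ, ∀ p : Set ℕ, e ∈ imp (j (j p)) (j p)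

def LawvereTierney (j : Set ℕ → Set ℕ) : Prop :=
  OpMonotone j ∧ OpInflationary j ∧ OpIdempotent j

def jU (U : Multifun) (p : Set ℕ) : Set ℕ := {x | ∃ A ∈ U x, A ⊆ p}

def SingleValued (U : Multifun) : Prop := ∀ x : ℕ, ∀ A ∈ U x, ∃ y : ℕ, A = {y}

def presInter (j : Set ℕ → Set ℕ) : Prop :=
  ∀ (ι : Type) [Nonempty ι] (p : ι → Set ℕ), j (⋂ i, p i) = ⋂ i, j (p i)

def presUnion (j : Set ℕ → Set ℕ) : Prop :=
  ∀ (ι : Type) (p : ι → Set ℕ), j (⋃ i, p i) = ⋃ i, j (p i)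

def Uop (j : Set ℕ → Set ℕ) : Multifun := fun x =>
  ⟨∃ p : Set ℕ, x ∈ j p, fun _ => ⋂₀ {p : Set ℕ | x ∈ j p}⟩

def mMorphism (e : ℕ) (f g : Multifun) : Prop :=
  ∀ (x : ℕ) (A : Set ℕ), A ∈ f x → ∃ c ∈ ap e x, ∃ B ∈ g c, B ⊆ A

def rMorphism (e : ℕ) (j k : Set ℕ → Set ℕ) : Prop :=
  ∀ p : Set ℕ, e ∈ imp (j p) (k p)

def rRed (j k : Set ℕ → Set ℕ) : Prop := ∃ e : ℕ, rMorphism e j k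


open Nat.Partrec (Code)
open Nat.Partrec.Code

lemma ap_partrec : Partrec₂ ap :=
  eval_part.comp ((Computable.ofNat Code).comp Computable.fst) Computable.snd

lemma exists_ap {f : ℕ →. ℕ} (hf : Partrec f) : ∃ e, ∀ x, ap e x = f x := by
  obtain ⟨c, hc⟩ := exists_code.1 (Partrec.nat_iff.1 hf)
  exact ⟨Encodable.encode c, fun x => by simp [ap, hc]⟩

lemma exists_ap_total {f : ℕ → ℕ} (hf : Computable f) :
    ∃ e, ∀ x, ap e x = Part.some (f x) := by
  obtain ⟨e, he⟩ := exists_ap hf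
  exact ⟨e, fun x => he x⟩

lemma smn' : ∃ s : ℕ → ℕ → ℕ, Computable₂ s ∧
    ∀ k x y, ap (s k x) y = ap k (Nat.pair x y) := by
  obtain ⟨F, Fc, hF⟩ := smn
  refine ⟨fun k x => Encodable.encode (F (Denumerable.ofNat Code k) x), ?_, ?_⟩
  · exact Computable.encode.comp
      (Fc.comp ((Computable.ofNat Code).comp Computable.fst) Computable.snd)
  · intro k x y; simp [ap, hF]

lemma compn : ∃ cn : ℕ → ℕ → ℕ, Computable₂ cn ∧
    ∀ a b x, ap (cn a b) x = (ap b x).bind (ap a) := by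
  refine ⟨fun a b => Encodable.encode
      ((Denumerable.ofNat Code a).comp (Denumerable.ofNat Code b)), ?_, ?_⟩
  · exact Computable.encode.comp
      ((primrec₂_comp.to_comp).comp ((Computable.ofNat Code).comp Computable.fst)
        ((Computable.ofNat Code).comp Computable.snd))
  · intro a b x; simp [ap, eval]; rfl

lemma cu2 : Computable fun w : ℕ => w.unpair.2 :=
  (Primrec.snd.comp Primrec.unpair).to_comp
lemma cu1 : Computable fun w : ℕ => w.unpair.1 :=
  (Primrec.fst.comp Primrec.unpair).to_comp
lemma ck : Computable fun w : ℕ => w.unpair.2.unpair.1 :=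
  (Primrec.fst.comp (Primrec.unpair.comp (Primrec.snd.comp Primrec.unpair))).to_comp
lemma cx : Computable fun w : ℕ => w.unpair.2.unpair.2 :=
  (Primrec.snd.comp (Primrec.unpair.comp (Primrec.snd.comp Primrec.unpair))).to_comp

lemma weih_pair (g : Multifun) (h k x : ℕ) :
    Weih g (Nat.pair h (Nat.pair k x)) =
    ⟨∃ c ∈ ap h x, ∃ B ∈ g c, ∀ y ∈ B, (ap k (Nat.pair x y)).Dom,
     fun _ => {z | ∃ c ∈ ap h x, ∃ B ∈ g c, ∃ y ∈ B, z ∈ ap k (Nat.pair x y)}⟩ := by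
  refine Part.ext' ?_ ?_
  · simp only [Weih, Nat.unpair_pair]
  · intros; simp only [Weih, Nat.unpair_pair]

lemma mRed_trans {f g h : Multifun} (h1 : mRed f g) (h2 : mRed g h) : mRed f h := by
  obtain ⟨cn, _, hcn⟩ := compn
  obtain ⟨e1, he1⟩ := h1
  obtain ⟨e2, he2⟩ := h2
  refine ⟨cn e2 e1, fun x A hA => ?_⟩
  obtain ⟨c, hc, B, hB, hBA⟩ := he1 x A hA
  obtain ⟨c2, hc2, B2, hB2, hB2B⟩ := he2 c B hB
  exact ⟨c2, by rw [hcn]; exact Part.mem_bind_iff.2 ⟨c, hc, hc2⟩, B2, hB2,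
    hB2B.trans hBA⟩

lemma weih_red (g : Multifun) (hg : Transparent g) : mRed (Weih g) g := by
  obtain ⟨u, hu⟩ := hg
  obtain ⟨s, scomp, hs⟩ := smn'
  have hF : Partrec fun w : ℕ => (ap w.unpair.1 w.unpair.2.unpair.2).bind fun c =>
      (ap u (s w.unpair.2.unpair.1 w.unpair.2.unpair.2)).bind fun c1 => ap c1 c := by
    refine (ap_partrec.comp cu1 cx).bind ?_
    exact ((ap_partrec.comp (Computable.const u)
        ((scomp.comp ck cx).comp Computable.fst)).bind
      (ap_partrec.comp Computable.snd
        (Computable.snd.comp Computable.fst)).to₂).to₂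
  obtain ⟨e, he⟩ := exists_ap hF
  refine ⟨e, fun w A hA => ?_⟩
  simp only [Weih] at hA
  obtain ⟨⟨c, hc, B, hB, hk⟩, hAeq⟩ := Part.mem_mk_iff.1 hA
  obtain ⟨c1, hc1, d, hd, B', hB', hsub⟩ :=
    hu (s w.unpair.2.unpair.1 w.unpair.2.unpair.2) c B hB
      (fun y hy => by rw [hs]; exact hk y hy)
  refine ⟨d, ?_, B', hB', ?_⟩
  · rw [he]
    exact Part.mem_bind_iff.2 ⟨c, hc, Part.mem_bind_iff.2 ⟨c1, hc1, hd⟩⟩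
  · intro z hz
    obtain ⟨y, hy, hzy⟩ := hsub hz
    rw [hs] at hzy
    rw [← hAeq]
    exact ⟨c, hc, B, hB, y, hy, hzy⟩

lemma red_weih (f : Multifun) : mRed f (Weih f) := by
  obtain ⟨h0, hh0⟩ := exists_ap_total Computable.id
  obtain ⟨k0, hk0⟩ := exists_ap_total cu2
  obtain ⟨e, he⟩ := exists_ap_total (f := fun x => Nat.pair h0 (Nat.pair k0 x))
    ((Primrec₂.natPair.comp (Primrec.const h0)
      (Primrec₂.natPair.comp (Primrec.const k0) Primrec.id)).to_comp)
  refine ⟨e, fun x A hA => ?_⟩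
  refine ⟨Nat.pair h0 (Nat.pair k0 x), by rw [he]; exact Part.mem_some _, ?_⟩
  rw [weih_pair]
  refine ⟨_, Part.mem_mk_iff.2 ⟨⟨x, by rw [hh0]; exact Part.mem_some _, A, hA,
    fun y hy => by rw [hk0]; trivial⟩, rfl⟩, ?_⟩
  intro z hz
  obtain ⟨c, hc, B, hB, y, hy, hzy⟩ := hz
  rw [hh0] at hc
  cases Part.mem_some_iff.1 hc
  have hBA : B = A := Part.mem_unique hB hA
  rw [hk0] at hzy
  have hz' := Part.mem_some_iff.1 hzy
  rw [Nat.unpair_pair] at hz'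
  subst hz'
  rw [← hBA]
  exact hy

lemma weih_mono {f g : Multifun} (h : mRed f g) : mRed (Weih f) (Weih g) := by
  obtain ⟨cn, cncomp, hcn⟩ := compn
  obtain ⟨e0, he0⟩ := h
  obtain ⟨e, he⟩ := exists_ap_total
    (f := fun w => Nat.pair (cn e0 w.unpair.1)
      (Nat.pair w.unpair.2.unpair.1 w.unpair.2.unpair.2))
    ((Primrec₂.natPair.to_comp).comp (cncomp.comp (Computable.const e0) cu1)
      ((Primrec₂.natPair.to_comp).comp ck cx))
  refine ⟨e, fun w A hA => ?_⟩
  simp only [Weih] at hA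
  obtain ⟨⟨c, hc, B, hB, hk⟩, hAeq⟩ := Part.mem_mk_iff.1 hA
  obtain ⟨c', hc', B', hB', hsub⟩ := he0 c B hB
  refine ⟨Nat.pair (cn e0 w.unpair.1)
    (Nat.pair w.unpair.2.unpair.1 w.unpair.2.unpair.2),
    by rw [he]; exact Part.mem_some _, ?_⟩
  have hc'w : c' ∈ ap (cn e0 w.unpair.1) w.unpair.2.unpair.2 := by
    rw [hcn]; exact Part.mem_bind_iff.2 ⟨c, hc, hc'⟩
  rw [weih_pair]
  refine ⟨_, Part.mem_mk_iff.2 ⟨⟨c', hc'w, B', hB',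
    fun y hy => hk y (hsub hy)⟩, rfl⟩, ?_⟩
  intro z hz
  obtain ⟨c2, hc2, B2, hB2, y, hy, hzy⟩ := hz
  have h1 : c2 = c' := Part.mem_unique hc2 hc'w
  subst h1
  have h2 : B2 = B' := Part.mem_unique hB2 hB'
  subst h2
  rw [← hAeq]
  exact ⟨c, hc, B, hB, y, hsub hy, hzy⟩


/-- If `g` is computably transparent then `Weih g ≤_m g`; consequently,
for all `f g` with `g` computably transparent, `f ≤_m g ↔ Weih f ≤_m g`
(`Weih` is left adjoint to the inclusion of the computably transparent
partial multifunctions, both preordered by `≤_m`). -/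
theorem weih_left_adjoint :
    (∀ g : Multifun, Transparent g → mRed (Weih g) g) ∧
    (∀ f g : Multifun, Transparent g → (mRed f g ↔ mRed (Weih f) g)) :=
  ⟨weih_red, fun f g hg =>
    ⟨fun h => mRed_trans (weih_mono h) (weih_red g hg),
     fun h => mRed_trans (red_weih f) h⟩⟩

end KleeneOracle
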